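/- The product ∏_{i=1}^N (1 − 1/p_i), taken over the first N primes p_i congruent to 3 mod 4, tends to 0 as N → ∞. -/

import Mathlib

open Filter

section Aux

open Filter ArithmeticFunction vonMangoldt

lemma cast_mod_iff (n : ℕ) : ((n : ZMod 4) = 3) ↔ n % 4 = 3 := by
  have h3 : ((3 : ℕ) : ZMod 4) = 3 := by norm_cast
  rw [← h3, ZMod.natCast_eq_natCast_iff']

lemma key (p : ℕ → ℕ) (hpmono : StrictMono p)
    (hp : ∀ i, (p i).Prime ∧ p i % 4 = 3)
    (hpall : ∀ q : ℕ, q.Prime → q % 4 = 3 → ∃ i, p i = q) :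
    ¬ Summable (fun i => ((p i : ℝ))⁻¹) := by
  intro hsum
  have ha : IsUnit (3 : ZMod 4) := by decide
  have hp3 : ∀ i, 3 ≤ p i := fun i => by have := (hp i).2; omega
  have hppos : ∀ i, (0:ℝ) < p i := fun i => by
    have := hp3 i; positivity
  have hp1 : ∀ i, (1:ℝ) ≤ p i := fun i => by
    have := hp3 i; exact_mod_cast le_trans (by norm_num) (Nat.cast_le.mpr this)
  set f : ℕ → ℝ := residueClass (3 : ZMod 4) with hf
  have hfp : ∀ i, f (p i) = Real.log (p i) := by
    intro i
    have hmem : (p i : ZMod 4) = 3 := (cast_mod_iff _).mpr (hp i).2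
    have h1 : f (p i) = vonMangoldt (p i) :=
      Set.indicator_of_mem (s := {n : ℕ | (n : ZMod 4) = 3})
        (show p i ∈ {n : ℕ | (n : ZMod 4) = 3} from hmem) _
    rw [h1, vonMangoldt_apply_prime (hp i).1]
  obtain ⟨C, hC⟩ := LSeries_residueClass_lower_bound ha
  set F : ℝ → ℕ → ℝ := fun x i => Real.log (p i) / (p i : ℝ) ^ x with hF
  have hFnonneg : ∀ x i, 0 ≤ F x i := fun x i => by
    have h1 := hp1 i
    have : (0:ℝ) ≤ Real.log (p i) := Real.log_nonneg h1
    positivity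
  have hFle : ∀ x, 1 < x → ∀ i, F x i ≤ (x - 1)⁻¹ * ((p i : ℝ))⁻¹ := by
    intro x hx i
    have hpi := hppos i
    have hrp : (0:ℝ) < (p i : ℝ) ^ x := Real.rpow_pos_of_pos hpi _
    have hlog : Real.log (p i) ≤ (p i : ℝ) ^ (x - 1) / (x - 1) :=
      Real.log_le_rpow_div hpi.le (by linarith)
    have hpow : (p i : ℝ) ^ x = (p i : ℝ) ^ (x - 1) * (p i : ℝ) := by
      rw [← Real.rpow_add_one hpi.ne' (x - 1)]; ring_nf
    show Real.log (p i) / (p i : ℝ) ^ x ≤ (x - 1)⁻¹ * ((p i : ℝ))⁻¹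
    rw [div_le_iff₀ hrp]
    calc Real.log (p i) ≤ (p i : ℝ) ^ (x - 1) / (x - 1) := hlog
      _ = (x - 1)⁻¹ * ((p i : ℝ))⁻¹ * (p i : ℝ) ^ x := by
          have hne : ((p i):ℝ) ≠ 0 := hpi.ne'
          have hx1ne : x - 1 ≠ 0 := sub_ne_zero.mpr hx.ne'
          rw [hpow]; field_simp
  -- summability of F x for x > 1
  have hFsum : ∀ x, 1 < x → Summable (F x) := by
    intro x hx
    exact Summable.of_nonneg_of_le (hFnonneg x) (hFle x hx) (hsum.mul_left _)
  -- choose T with small tail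
  have htail : Tendsto (fun T => ∑' i, ((p (i + T) : ℝ))⁻¹) atTop (nhds 0) :=
    tendsto_sum_nat_add fun i => ((p i : ℝ))⁻¹
  obtain ⟨T, hT⟩ : ∃ T, ∑' i, ((p (i + T) : ℝ))⁻¹ < 4⁻¹ := by
    have := (htail.eventually (gt_mem_nhds (by norm_num : (0:ℝ) < 4⁻¹))).exists
    exact this
  set A : ℝ := ∑ i ∈ Finset.range T, Real.log (p i) / (p i : ℝ) with hA
  set D : ℝ := ∑' n : ℕ, (if n.Prime then 0 else f n) / (n : ℝ) with hD
  have hDsum : Summable fun n : ℕ => (if n.Prime then 0 else f n) / (n : ℝ) :=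
    summable_residueClass_non_primes_div (3 : ZMod 4)
  have hfnonneg : ∀ n, 0 ≤ f n := residueClass_nonneg _
  -- main estimate
  have main : ∀ x : ℝ, x ∈ Set.Ioc 1 2 →
      (2:ℝ)⁻¹ / (x - 1) - C ≤ A + (x - 1)⁻¹ * 4⁻¹ + D := by
    intro x hx
    have hx1 : 1 < x := hx.1
    -- support of prime part in range p
    have hsupp : Function.support (fun n : ℕ => (if n.Prime then f n else 0) / (n : ℝ) ^ x)
        ⊆ Set.range p := by
      intro n hn
      simp only [Function.mem_support] at hn
      by_cases hnp : n.Prime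
      · rw [if_pos hnp] at hn
        have hfn : f n ≠ 0 := fun h => hn (by rw [h, zero_div])
        have hmem : (n : ZMod 4) = 3 := by
          by_contra hmem
          exact hfn (Set.indicator_of_notMem (s := {m : ℕ | (m : ZMod 4) = 3})
            (show n ∉ {m : ℕ | (m : ZMod 4) = 3} from hmem) _)
        obtain ⟨i, hi⟩ := hpall n hnp ((cast_mod_iff n).mp hmem)
        exact ⟨i, hi⟩
      · rw [if_neg hnp, zero_div] at hn; exact absurd rfl hn
    have hcomp : ∀ i, (if (p i).Prime then f (p i) else 0) / ((p i) : ℝ) ^ x = F x i := by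
      intro i
      rw [if_pos (hp i).1, hfp i]
    -- prime part tsum equality
    have hprime_eq : ∑' n : ℕ, (if n.Prime then f n else 0) / (n : ℝ) ^ x = ∑' i, F x i := by
      rw [← hpmono.injective.tsum_eq hsupp]
      exact tsum_congr hcomp
    have hgsum : Summable (fun n : ℕ => (if n.Prime then f n else 0) / (n : ℝ) ^ x) := by
      rw [← hpmono.injective.summable_iff
        (fun n hn => Function.notMem_support.mp fun hns => hn (hsupp hns))]
      exact (hFsum x hx1).congr fun i => (hcomp i).symm
    -- non-prime part
    have hhle : ∀ n : ℕ, (if n.Prime then 0 else f n) / (n : ℝ) ^ x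
        ≤ (if n.Prime then 0 else f n) / (n : ℝ) := by
      intro n
      rcases Nat.eq_zero_or_pos n with rfl | hn
      · simp [hf]
      · have hn1 : (1:ℝ) ≤ n := by exact_mod_cast hn
        have hnum : 0 ≤ (if n.Prime then 0 else f n) := by
          split_ifs
          exacts [le_rfl, hfnonneg n]
        gcongr
        calc (n:ℝ) = (n:ℝ) ^ (1:ℝ) := (Real.rpow_one _).symm
            _ ≤ (n:ℝ) ^ x := Real.rpow_le_rpow_of_exponent_le hn1 hx1.le
    have hhnonneg : ∀ n : ℕ, 0 ≤ (if n.Prime then 0 else f n) / (n : ℝ) ^ x := by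
      intro n
      have : 0 ≤ (if n.Prime then 0 else f n) := by
        split_ifs
        exacts [le_rfl, hfnonneg n]
      positivity
    have hhsum : Summable (fun n : ℕ => (if n.Prime then 0 else f n) / (n : ℝ) ^ x) :=
      Summable.of_nonneg_of_le hhnonneg hhle hDsum
    -- total splits
    have hsplit : ∑' n : ℕ, f n / (n : ℝ) ^ x
        = (∑' n : ℕ, (if n.Prime then f n else 0) / (n : ℝ) ^ x)
          + ∑' n : ℕ, (if n.Prime then 0 else f n) / (n : ℝ) ^ x := by
      rw [← Summable.tsum_add hgsum hhsum]
      refine tsum_congr fun n => ?_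
      split_ifs <;> ring
    -- bound prime part
    have hFx := hFsum x hx1
    have hsplitF := Summable.sum_add_tsum_nat_add T hFx
    have hhead : ∑ i ∈ Finset.range T, F x i ≤ A := by
      refine Finset.sum_le_sum fun i _ => ?_
      show Real.log (p i) / (p i : ℝ) ^ x ≤ Real.log (p i) / (p i : ℝ)
      have hl : (0:ℝ) ≤ Real.log (p i) := Real.log_nonneg (hp1 i)
      gcongr
      · exact hppos i
      · calc ((p i):ℝ) = ((p i):ℝ) ^ (1:ℝ) := (Real.rpow_one _).symm
          _ ≤ ((p i):ℝ) ^ x := Real.rpow_le_rpow_of_exponent_le (hp1 i) hx1.le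
    have htailbound : ∑' i, F x (i + T) ≤ (x - 1)⁻¹ * 4⁻¹ := by
      have h1 : ∑' i, F x (i + T) ≤ ∑' i, (x - 1)⁻¹ * ((p (i + T) : ℝ))⁻¹ := by
        refine Summable.tsum_le_tsum (fun i => hFle x hx1 (i + T)) ((hFx).comp_injective (add_left_injective T)) ?_
        exact ((hsum.comp_injective (add_left_injective T)).mul_left _)
      have h2 : ∑' i, (x - 1)⁻¹ * ((p (i + T) : ℝ))⁻¹ = (x - 1)⁻¹ * ∑' i, ((p (i + T) : ℝ))⁻¹ :=
        tsum_mul_left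
      have hx0 : (0:ℝ) ≤ (x - 1)⁻¹ := inv_nonneg.mpr (by linarith)
      calc ∑' i, F x (i + T) ≤ (x - 1)⁻¹ * ∑' i, ((p (i + T) : ℝ))⁻¹ := by rw [← h2]; exact h1
        _ ≤ (x - 1)⁻¹ * 4⁻¹ := by
            exact mul_le_mul_of_nonneg_left hT.le hx0
    have hDle : ∑' n : ℕ, (if n.Prime then 0 else f n) / (n : ℝ) ^ x ≤ D :=
      Summable.tsum_le_tsum hhle hhsum hDsum
    have htot := hC hx
    rw [show Nat.totient 4 = 2 from rfl] at htot
    rw [show ((2:ℕ):ℝ) = 2 from by norm_num] at htot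
    calc (2:ℝ)⁻¹ / (x - 1) - C ≤ ∑' n : ℕ, f n / (n : ℝ) ^ x := htot
      _ = (∑' i, F x i) + ∑' n : ℕ, (if n.Prime then 0 else f n) / (n : ℝ) ^ x := by
          rw [hsplit, hprime_eq]
      _ ≤ (∑ i ∈ Finset.range T, F x i + ∑' i, F x (i + T)) + D := by
          rw [hsplitF]; exact add_le_add le_rfl hDle
      _ ≤ A + (x - 1)⁻¹ * 4⁻¹ + D := by
          exact add_le_add (add_le_add hhead htailbound) le_rfl
  -- contradiction
  set B : ℝ := C + A + D with hB
  have habs : ∀ x : ℝ, x ∈ Set.Ioc 1 2 → (x - 1)⁻¹ * 4⁻¹ ≤ B := by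
    intro x hx
    have := main x hx
    have : (2:ℝ)⁻¹ / (x - 1) - C ≤ A + (x - 1)⁻¹ * 4⁻¹ + D := this
    have hxi : (0:ℝ) < (x - 1)⁻¹ := by
      have h1 : (0:ℝ) < x - 1 := by have := hx.1; linarith
      positivity
    have hdiv : (2:ℝ)⁻¹ / (x - 1) = 2⁻¹ * (x - 1)⁻¹ := div_eq_mul_inv _ _
    rw [hB]
    nlinarith [this, hdiv]
  set δ : ℝ := min 1 (4 * |B| + 4)⁻¹ with hδ
  have hδ0 : 0 < δ := by
    have h4 : (0:ℝ) < 4 * |B| + 4 := by positivity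
    exact lt_min one_pos (inv_pos.mpr h4)
  have hδ1 : δ ≤ 1 := min_le_left _ _
  have hmem : 1 + δ ∈ Set.Ioc (1:ℝ) 2 := ⟨by linarith, by linarith⟩
  have h1 := habs (1 + δ) hmem
  have hδ2 : δ ≤ (4 * |B| + 4)⁻¹ := min_le_right _ _
  have h2 : (4 * |B| + 4) ≤ δ⁻¹ := by
    rw [← inv_inv (4 * |B| + 4)]
    exact inv_anti₀ hδ0 hδ2
  have h3 : (1 + δ - 1)⁻¹ = δ⁻¹ := by ring_nf
  rw [h3] at h1
  have hBabs : B ≤ |B| := le_abs_self B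
  nlinarith [h1, h2, hBabs, abs_nonneg B]

end Aux

theorem stmt_13 (p : ℕ → ℕ) (hpmono : StrictMono p)
    (hp : ∀ i, (p i).Prime ∧ p i % 4 = 3)
    (hpall : ∀ q : ℕ, q.Prime → q % 4 = 3 → ∃ i, p i = q) :
    Tendsto (fun N : ℕ => ∏ i ∈ Finset.range N, (1 - 1 / (p i : ℝ))) atTop (nhds 0) := by
  have hns : ¬ Summable (fun i => ((p i : ℝ))⁻¹) := key p hpmono hp hpall
  have hp3 : ∀ i, 3 ≤ p i := fun i => by have := (hp i).2; omega
  have hppos : ∀ i, (0:ℝ) < p i := fun i => by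
    have h := hp3 i
    have : (3:ℝ) ≤ p i := by exact_mod_cast Nat.cast_le.mpr h
    linarith
  have hnonneg : ∀ i, (0:ℝ) ≤ ((p i : ℝ))⁻¹ := fun i => (inv_nonneg).mpr (hppos i).le
  have hS : Tendsto (fun N => ∑ i ∈ Finset.range N, ((p i : ℝ))⁻¹) atTop atTop :=
    (not_summable_iff_tendsto_nat_atTop_of_nonneg hnonneg).mp hns
  have hfac_nonneg : ∀ i, (0:ℝ) ≤ 1 - 1 / (p i : ℝ) := by
    intro i
    have h3 : (3:ℝ) ≤ p i := by exact_mod_cast Nat.cast_le.mpr (hp3 i)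
    have : 1 / ((p i):ℝ) ≤ 1 := by
      rw [div_le_one (hppos i)]; linarith
    linarith
  have hub : ∀ N, ∏ i ∈ Finset.range N, (1 - 1 / (p i : ℝ))
      ≤ Real.exp (-∑ i ∈ Finset.range N, ((p i : ℝ))⁻¹) := by
    intro N
    rw [← Finset.sum_neg_distrib, Real.exp_sum]
    refine Finset.prod_le_prod (fun i _ => hfac_nonneg i) fun i _ => ?_
    have := Real.add_one_le_exp (-((p i : ℝ))⁻¹)
    calc 1 - 1 / ((p i):ℝ) = -((p i : ℝ))⁻¹ + 1 := by rw [one_div]; ring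
      _ ≤ Real.exp (-((p i : ℝ))⁻¹) := this
  have hexp : Tendsto (fun N => Real.exp (-∑ i ∈ Finset.range N, ((p i : ℝ))⁻¹))
      atTop (nhds 0) :=
    Real.tendsto_exp_atBot.comp (tendsto_neg_atTop_atBot.comp hS)
  exact squeeze_zero (fun N => Finset.prod_nonneg fun i _ => hfac_nonneg i) hub hexp
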